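/- arXiv:2401.06405 — 4 statements merged into one kernel-verified Lean document; each statement's English description precedes it below -/
import Mathlib

section
/- Let n ≥ 2, k ≥ 1, and f : ℤ^k → ℤ an operation. The operator that maps each S ⊆ ℤ^n to ⋈_{1≤i<j≤n} cl_f(π_{i,j}(S)) ⊆ ℤ^n is a closure operator: it is extensive (S ⊆ ⋈_{1≤i<j≤n} cl_f(π_{i,j}(S))), monotone (S₁ ⊆ S₂ implies ⋈ cl_f(π_{i,j}(S₁)) ⊆ ⋈ cl_f(π_{i,j}(S₂))), and idempotent (applying it twice gives the same result as applying it once). -/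
/-- Componentwise closedness of a set of `ι`-indexed integer vectors under a
`k`-ary operation `f : ℤ^k → ℤ`. -/
def CptClosed {k : ℕ} {ι : Type*} (f : (Fin k → ℤ) → ℤ) (S : Set (ι → ℤ)) : Prop :=
  ∀ x : Fin k → ι → ℤ, (∀ l, x l ∈ S) → (fun i => f (fun l => x l i)) ∈ S

/-- `f : ℤ³ → ℤ` is a majority operation. -/
def IsMajorityOp (f : (Fin 3 → ℤ) → ℤ) : Prop :=
  ∀ a b : ℤ, f ![a, a, b] = a ∧ f ![a, b, a] = a ∧ f ![b, a, a] = a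

/-- `S` is closed under some majority operation. -/
def MajClosed {ι : Type*} (S : Set (ι → ℤ)) : Prop :=
  ∃ f : (Fin 3 → ℤ) → ℤ, IsMajorityOp f ∧ CptClosed f S

/-- The projection `π_{i,j}(x) = (x_i, x_j)`. -/
def proj2 {n : ℕ} (i j : Fin n) (x : Fin n → ℤ) : Fin 2 → ℤ := ![x i, x j]

/-- The projection `π_{i,j}(S)`. -/
def projSet {n : ℕ} (i j : Fin n) (S : Set (Fin n → ℤ)) : Set (Fin 2 → ℤ) :=
  proj2 i j '' S

/-- The join `⋈_{1 ≤ i < j ≤ n} F i j`. -/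
def joinPairs {n : ℕ} (F : Fin n → Fin n → Set (Fin 2 → ℤ)) : Set (Fin n → ℤ) :=
  {x | ∀ i j : Fin n, i < j → proj2 i j x ∈ F i j}

/-- The `f`-closure of `S`: the intersection of all `f`-closed supersets of `S`. -/
def clOp {k m : ℕ} (f : (Fin k → ℤ) → ℤ) (S : Set (Fin m → ℤ)) : Set (Fin m → ℤ) :=
  ⋂₀ {T | S ⊆ T ∧ CptClosed f T}

/-- The directed discrete midpoint operation `μ`. -/
def muOp : (Fin 2 → ℤ) → ℤ := fun t =>
  if t 1 ≤ t 0 then ⌈((t 0 + t 1 : ℤ) : ℚ) / 2⌉ else ⌊((t 0 + t 1 : ℤ) : ℚ) / 2⌋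

/-- The operation `g(x,y) = ⌈(x+y)/2⌉`. -/
def ceilAvgOp : (Fin 2 → ℤ) → ℤ := fun t => ⌈((t 0 + t 1 : ℤ) : ℚ) / 2⌉

/-- The operation `h(x,y) = ⌊(x+y)/2⌋`. -/
def floorAvgOp : (Fin 2 → ℤ) → ℤ := fun t => ⌊((t 0 + t 1 : ℤ) : ℚ) / 2⌋

/-- The median operation on three integers. -/
def medianOp : (Fin 3 → ℤ) → ℤ := fun t =>
  max (max (min (t 0) (t 1)) (min (t 1) (t 2))) (min (t 0) (t 2))

/-- The canonical embedding `ℤ^m → ℝ^m`. -/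
def toR {m : ℕ} (z : Fin m → ℤ) : Fin m → ℝ := fun l => (z l : ℝ)

/-- The integer neighborhood `N(x)` of a real vector `x`. -/
def intNbhd {m : ℕ} (x : Fin m → ℝ) : Set (Fin m → ℤ) :=
  {z | ∀ j, |(z j : ℝ) - x j| < 1}

/-- `S` is midpoint-neighbor-closed: for all `x, y ∈ S`, `N((x+y)/2) ⊆ S`. -/
def MidpointNeighborClosed {m : ℕ} (S : Set (Fin m → ℤ)) : Prop :=
  ∀ x ∈ S, ∀ y ∈ S, ∀ z : Fin m → ℤ,
    (∀ j, |(z j : ℝ) - ((x j : ℝ) + (y j : ℝ)) / 2| < 1) → z ∈ S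

/-- `S ⊆ ℤ^m` is integrally convex. -/
def IntegrallyConvex {m : ℕ} (S : Set (Fin m → ℤ)) : Prop :=
  ∀ x : Fin m → ℝ, x ∈ convexHull ℝ (toR '' S) →
    x ∈ convexHull ℝ (toR '' (S ∩ intNbhd x))

/-- The closed convex closure of `T ⊆ ℤ^m` inside `ℝ^m`: the intersection of all
topologically closed convex sets containing `T`. -/
def closedConvexClosure {m : ℕ} (T : Set (Fin m → ℤ)) : Set (Fin m → ℝ) :=
  ⋂₀ {C : Set (Fin m → ℝ) | Convex ℝ C ∧ IsClosed C ∧ toR '' T ⊆ C}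

/-- `S = cl_conv̄(S) ∩ ℤ^m`. -/
def ClosedConvexIntegral {m : ℕ} (S : Set (Fin m → ℤ)) : Prop :=
  S = {z : Fin m → ℤ | toR z ∈ closedConvexClosure S}

/-- All entries of `A` lie in `{0, -1, +1}`. -/
def UnitMatrix {mR n : ℕ} (A : Matrix (Fin mR) (Fin n) ℤ) : Prop :=
  ∀ i j, A i j = 0 ∨ A i j = -1 ∨ A i j = 1

/-- Each row of `A` has at most `c` nonzero entries. -/
def RowSupportLE {mR n : ℕ} (A : Matrix (Fin mR) (Fin n) ℤ) (c : ℕ) : Prop :=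
  ∀ i, {j | A i j ≠ 0}.ncard ≤ c

/-- `S` is representable by a UTVPI system. -/
def RepUTVPI {n : ℕ} (S : Set (Fin n → ℤ)) : Prop :=
  ∃ (mR : ℕ) (A : Matrix (Fin mR) (Fin n) ℤ) (b : Fin mR → ℝ),
    UnitMatrix A ∧ RowSupportLE A 2 ∧
    S = {x | ∀ i, b i ≤ ((∑ j, A i j * x j : ℤ) : ℝ)}

/-- `S` is representable by an SVPI system. -/
def RepSVPI {n : ℕ} (S : Set (Fin n → ℤ)) : Prop :=
  ∃ (mR : ℕ) (A : Matrix (Fin mR) (Fin n) ℤ) (b : Fin mR → ℝ),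
    UnitMatrix A ∧ RowSupportLE A 1 ∧
    S = {x | ∀ i, b i ≤ ((∑ j, A i j * x j : ℤ) : ℝ)}

/-- `S` is representable by a DC system. -/
def RepDC {n : ℕ} (S : Set (Fin n → ℤ)) : Prop :=
  ∃ (mR : ℕ) (A : Matrix (Fin mR) (Fin n) ℤ) (b : Fin mR → ℝ),
    UnitMatrix A ∧
    (∀ i, {j | A i j = 1}.ncard ≤ 1) ∧ (∀ i, {j | A i j = -1}.ncard ≤ 1) ∧
    S = {x | ∀ i, b i ≤ ((∑ j, A i j * x j : ℤ) : ℝ)}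

/-- `S` is representable by a TVPI system with possibly infinitely many inequalities. -/
def RepTVPIInf {n : ℕ} (S : Set (Fin n → ℤ)) : Prop :=
  ∃ (I : Type) (a1 a2 b : I → ℝ) (p q : I → Fin n),
    S = {x | ∀ i : I, b i ≤ a1 i * (x (p i) : ℝ) + a2 i * (x (q i) : ℝ)}

/-- `S` is 2-decomposable: `S = ⋈_{i<j} π_{i,j}(S)`. -/
def TwoDecomposable {ι : Type*} [LinearOrder ι] (S : Set (ι → ℤ)) : Prop :=
  S = {x | ∀ i j : ι, i < j → ∃ s ∈ S, s i = x i ∧ s j = x j}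

lemma clOp_extensive {k m : ℕ} (f : (Fin k → ℤ) → ℤ) (S : Set (Fin m → ℤ)) :
    S ⊆ clOp f S := fun x hx T hT => hT.1 hx

lemma clOp_closed {k m : ℕ} (f : (Fin k → ℤ) → ℤ) (S : Set (Fin m → ℤ)) :
    CptClosed f (clOp f S) := by
  intro x hx T hT
  exact hT.2 x (fun l => hx l T hT)

lemma clOp_min {k m : ℕ} (f : (Fin k → ℤ) → ℤ) {S T : Set (Fin m → ℤ)}
    (hST : S ⊆ T) (hT : CptClosed f T) : clOp f S ⊆ T :=
  Set.sInter_subset_of_mem ⟨hST, hT⟩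

lemma clOp_mono {k m : ℕ} (f : (Fin k → ℤ) → ℤ) {S T : Set (Fin m → ℤ)}
    (hST : S ⊆ T) : clOp f S ⊆ clOp f T :=
  clOp_min f (hST.trans (clOp_extensive f T)) (clOp_closed f T)

/-- `S ↦ ⋈_{i<j} cl_f(π_{i,j}(S))` is a closure operator:
extensive, monotone and idempotent. -/
theorem stmt_1 {n k : ℕ} (hn : 2 ≤ n) (hk : 1 ≤ k) (f : (Fin k → ℤ) → ℤ) :
    (∀ S : Set (Fin n → ℤ),
      S ⊆ joinPairs (fun i j => clOp f (projSet i j S))) ∧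
    (∀ S₁ S₂ : Set (Fin n → ℤ), S₁ ⊆ S₂ →
      joinPairs (fun i j => clOp f (projSet i j S₁)) ⊆
        joinPairs (fun i j => clOp f (projSet i j S₂))) ∧
    (∀ S : Set (Fin n → ℤ),
      joinPairs (fun i j => clOp f
          (projSet i j (joinPairs (fun i j => clOp f (projSet i j S))))) =
        joinPairs (fun i j => clOp f (projSet i j S))) := by
  refine ⟨?ext, ?mono, ?_⟩
  case ext =>
    intro S x hx i j _
    exact clOp_extensive f _ ⟨x, hx, rfl⟩
  case mono =>
    intro S₁ S₂ h x hx i j hij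
    exact clOp_mono f (Set.image_mono h) (hx i j hij)
  · intro S
    apply Set.Subset.antisymm
    · intro x hx i j hij
      refine clOp_min f ?_ (clOp_closed f _) (hx i j hij)
      rintro p ⟨y, hy, rfl⟩
      exact hy i j hij
    · intro x hx i j _
      exact clOp_extensive f _ ⟨x, hx, rfl⟩
end

section
/- Let n ≥ 2 and S ⊆ ℤ^n. Consider the properties: (i) S is closed under some majority operation and S = cl_conv̄(S) ∩ ℤ^n; (ii) S is closed under some majority operation, and for each 1 ≤ i < j ≤ n, π_{i,j}(S) = cl_conv̄(π_{i,j}(S)) ∩ ℤ²; (iii) S = ⋈_{1≤i<j≤n} π_{i,j}(S), and for each 1 ≤ i < j ≤ n, π_{i,j}(S) = cl_conv̄(π_{i,j}(S)) ∩ ℤ²; (iv) S = ⋈_{1≤i<j≤n} (cl_conv̄(π_{i,j}(S)) ∩ ℤ²). Then (ii) ⇔ (iii), (iii) ⇒ (iv), and (iv) ⇒ (i). -/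
private def medR (a b c : ℝ) : ℝ := max (max (min a b) (min b c)) (min a c)
lemma medR_swap1 (a b c : ℝ) : medR a b c = medR b a c := by
  rcases le_total a b with h1|h1 <;> rcases le_total b c with h2|h2 <;>
    rcases le_total a c with h3|h3 <;>
    simp [medR, min_def, max_def] <;> split_ifs <;> linarith
lemma medR_swap2 (a b c : ℝ) : medR a b c = medR a c b := by
  rcases le_total a b with h1|h1 <;> rcases le_total b c with h2|h2 <;>
    rcases le_total a c with h3|h3 <;>
    simp [medR, min_def, max_def] <;> split_ifs <;> linarith
lemma medR_sorted {a b c : ℝ} (h1 : a ≤ b) (h2 : b ≤ c) : medR a b c = b := by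
  simp [medR, min_def, max_def] <;> split_ifs <;> linarith
lemma medR_between {a b c w : ℝ} (h1 : min a c ≤ w) (h2 : w ≤ max a c) :
    min b w ≤ medR a b c ∧ medR a b c ≤ max b w := by
  rcases le_total a b with p1|p1 <;> rcases le_total b c with p2|p2 <;>
    rcases le_total a c with p3|p3 <;>
    constructor <;>
    simp only [medR, min_def, max_def] at * <;> split_ifs at * <;> linarith

lemma convex_med_sorted {C : Set (Fin 2 → ℝ)} (hC : Convex ℝ C)
    {p q r : Fin 2 → ℝ} (hp : p ∈ C) (hq : q ∈ C) (hr : r ∈ C)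
    (h1 : p 0 ≤ q 0) (h2 : q 0 ≤ r 0) :
    (fun i => medR (p i) (q i) (r i)) ∈ C := by
  set t : ℝ := if r 0 = p 0 then 0 else (q 0 - p 0) / (r 0 - p 0) with ht
  have hrp : p 0 ≤ r 0 := h1.trans h2
  have ht0 : 0 ≤ t := by
    rw [ht]; split_ifs with h
    · exact le_refl 0
    · apply div_nonneg <;> linarith
  have ht1 : t ≤ 1 := by
    rw [ht]; split_ifs with h
    · norm_num
    · rw [div_le_one (by cases lt_or_eq_of_le hrp with
        | inl hlt => linarith
        | inr heq => exact absurd heq.symm h)]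
      linarith
  set w : Fin 2 → ℝ := (1 - t) • p + t • r with hw
  have hwC : w ∈ C := hC hp hr (by linarith) ht0 (by ring)
  have hwap : ∀ i, w i = (1 - t) * p i + t * r i := by
    intro i; simp [hw]
  have hw0 : w 0 = q 0 := by
    rw [hwap]
    by_cases h : r 0 = p 0
    · simp only [ht, if_pos h]; rw [h]; linarith
    · simp only [ht, if_neg h]
      have : r 0 - p 0 ≠ 0 := fun hh => h (by linarith)
      field_simp
      ring
  have hwy1 : min (p 1) (r 1) ≤ w 1 := by
    rw [hwap]
    rcases le_total (p 1) (r 1) with h|h <;> [rw [min_eq_left h]; rw [min_eq_right h]] <;>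
      nlinarith
  have hwy2 : w 1 ≤ max (p 1) (r 1) := by
    rw [hwap]
    rcases le_total (p 1) (r 1) with h|h <;> [rw [max_eq_right h]; rw [max_eq_left h]] <;>
      nlinarith
  obtain ⟨hm1, hm2⟩ := medR_between (b := q 1) hwy1 hwy2
  set m1 : ℝ := medR (p 1) (q 1) (r 1) with hm
  set s : ℝ := if w 1 = q 1 then 0 else (m1 - q 1) / (w 1 - q 1) with hs
  have hs0 : 0 ≤ s := by
    rw [hs]; split_ifs with h
    · exact le_refl 0
    · rcases lt_or_gt_of_ne (fun hh : w 1 = q 1 => h hh) with hlt|hgt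
      · rw [div_nonneg_iff]; right
        have := hm2; rw [max_eq_left (by linarith : w 1 ≤ q 1)] at this
        exact ⟨by linarith, by linarith⟩
      · rw [div_nonneg_iff]; left
        have := hm1; rw [min_eq_left (by linarith : q 1 ≤ w 1)] at this
        exact ⟨by linarith, by linarith⟩
  have hs1 : s ≤ 1 := by
    rw [hs]; split_ifs with h
    · norm_num
    · rcases lt_or_gt_of_ne (fun hh : w 1 = q 1 => h hh) with hlt|hgt
      · rw [div_le_one_iff]
        have := hm1; rw [min_eq_right (by linarith : w 1 ≤ q 1)] at this
        exact Or.inr (Or.inr ⟨by linarith, by linarith⟩)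
      · rw [div_le_one (by linarith)]
        have := hm2; rw [max_eq_right (by linarith : q 1 ≤ w 1)] at this; linarith
  have key : (fun i => medR (p i) (q i) (r i)) = (1 - s) • q + s • w := by
    funext i
    have hi : (1 - s) • q + s • w = fun i => (1 - s) * q i + s * w i := by
      funext i; simp
    rw [hi]
    fin_cases i
    · show medR (p 0) (q 0) (r 0) = (1 - s) * q 0 + s * w 0
      rw [medR_sorted h1 h2, hw0]; ring
    · show medR (p 1) (q 1) (r 1) = (1 - s) * q 1 + s * w 1
      by_cases h : w 1 = q 1
      · simp only [hs, if_pos h]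
        rw [h] at hm1 hm2
        simp at hm1 hm2
        have : m1 = q 1 := le_antisymm hm2 hm1
        rw [← hm, this]; ring
      · simp only [hs, if_neg h]
        have hne : w 1 - q 1 ≠ 0 := fun hh => h (by linarith)
        rw [← hm]
        field_simp
        ring
  rw [key]
  exact hC hq hwC (by linarith) hs0 (by ring)

lemma convex_med {C : Set (Fin 2 → ℝ)} (hC : Convex ℝ C)
    {p q r : Fin 2 → ℝ} (hp : p ∈ C) (hq : q ∈ C) (hr : r ∈ C) :
    (fun i => medR (p i) (q i) (r i)) ∈ C := by
  rcases le_total (p 0) (q 0) with pq|qp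
  · rcases le_total (q 0) (r 0) with qr|rq
    · exact convex_med_sorted hC hp hq hr pq qr
    · rcases le_total (p 0) (r 0) with pr|rp
      · have := convex_med_sorted hC hp hr hq pr rq
        simpa only [← medR_swap2] using this
      · have := convex_med_sorted hC hr hp hq rp pq
        have e : (fun i => medR (r i) (p i) (q i)) = fun i => medR (p i) (q i) (r i) := by
          funext i; rw [medR_swap1, medR_swap2]
        rwa [e] at this
  · rcases le_total (q 0) (r 0) with qr|rq
    · rcases le_total (p 0) (r 0) with pr|rp
      · have := convex_med_sorted hC hq hp hr qp pr
        simpa only [← medR_swap1] using this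
      · have := convex_med_sorted hC hq hr hp qr rp
        have e : (fun i => medR (q i) (r i) (p i)) = fun i => medR (p i) (q i) (r i) := by
          funext i; rw [medR_swap2, medR_swap1]
        rwa [e] at this
    · have := convex_med_sorted hC hr hq hp rq qp
      have e : (fun i => medR (r i) (q i) (p i)) = fun i => medR (p i) (q i) (r i) := by
        funext i; rw [medR_swap1, medR_swap2, medR_swap1]
      rwa [e] at this

lemma toR_medianOp {p q r : Fin 2 → ℤ} :
    toR (fun k => medianOp ![p k, q k, r k]) = fun k => medR ((p k : ℝ)) (q k) (r k) := by
  funext k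
  simp only [toR, medianOp, medR, Matrix.cons_val_zero, Matrix.cons_val_one, Matrix.head_cons,
    Matrix.cons_val_two, Matrix.tail_cons]
  push_cast
  rfl

lemma medianOp_isMajority : IsMajorityOp medianOp := by
  intro a b
  refine ⟨?_, ?_, ?_⟩ <;>
    simp [medianOp, Matrix.cons_val_zero, Matrix.cons_val_one, Matrix.head_cons,
      min_def, max_def] <;> split_ifs <;> omega

lemma ccc_convex {m : ℕ} (T : Set (Fin m → ℤ)) : Convex ℝ (closedConvexClosure T) :=
  convex_sInter (fun _ hC => hC.1)

lemma ccc_closed {m : ℕ} (T : Set (Fin m → ℤ)) : IsClosed (closedConvexClosure T) :=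
  isClosed_sInter (fun _ hC => hC.2.1)

lemma subset_ccc {m : ℕ} (T : Set (Fin m → ℤ)) : toR '' T ⊆ closedConvexClosure T :=
  fun x hx => Set.mem_sInter.2 fun _ hC => hC.2.2 hx

lemma medianOp_mem_of_convex {C : Set (Fin 2 → ℝ)} (hC : Convex ℝ C)
    {p q r : Fin 2 → ℤ} (hp : toR p ∈ C) (hq : toR q ∈ C) (hr : toR r ∈ C) :
    toR (fun k => medianOp ![p k, q k, r k]) ∈ C := by
  rw [toR_medianOp]
  exact convex_med hC hp hq hr

lemma majClosed_of_join {n : ℕ} {S : Set (Fin n → ℤ)} {F : Fin n → Fin n → Set (Fin 2 → ℤ)}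
    (hS : S = joinPairs F)
    (hF : ∀ i j, i < j → ∀ p ∈ F i j, ∀ q ∈ F i j, ∀ r ∈ F i j,
        (fun k => medianOp ![p k, q k, r k]) ∈ F i j) : MajClosed S := by
  refine ⟨medianOp, medianOp_isMajority, ?_⟩
  intro x hx
  rw [hS]
  intro i j hij
  have hmem : ∀ l, proj2 i j (x l) ∈ F i j := fun l => (hS ▸ hx l) i j hij
  have := hF i j hij _ (hmem 0) _ (hmem 1) _ (hmem 2)
  have e2 : ∀ i' : Fin n, (fun l => x l i') = ![x 0 i', x 1 i', x 2 i'] := by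
    intro i'; funext l; fin_cases l <;> rfl
  have e : proj2 i j (fun i => medianOp (fun l => x l i)) =
      fun k => medianOp ![proj2 i j (x 0) k, proj2 i j (x 1) k, proj2 i j (x 2) k] := by
    funext k
    fin_cases k <;> simp [proj2] <;> rw [e2]
  rwa [e]

lemma bakerPixley {n : ℕ} {S : Set (Fin n → ℤ)} {f : (Fin 3 → ℤ) → ℤ}
    (hf : IsMajorityOp f) (hcl : CptClosed f S) (x : Fin n → ℤ)
    (hx : ∀ i j : Fin n, i < j → ∃ s ∈ S, s i = x i ∧ s j = x j) :
    ∀ (k : ℕ) (A : Finset (Fin n)), A.card = k + 2 → ∃ s ∈ S, ∀ i ∈ A, s i = x i := by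
  intro k
  induction k with
  | zero =>
    intro A hA
    obtain ⟨a, b, hab, rfl⟩ := Finset.card_eq_two.1 hA
    rcases lt_or_gt_of_ne hab with h|h
    · obtain ⟨s, hs, h1, h2⟩ := hx a b h
      exact ⟨s, hs, fun i hi => by
        rcases Finset.mem_insert.1 hi with rfl|hi
        · exact h1
        · rw [Finset.mem_singleton.1 hi]; exact h2⟩
    · obtain ⟨s, hs, h1, h2⟩ := hx b a h
      exact ⟨s, hs, fun i hi => by
        rcases Finset.mem_insert.1 hi with rfl|hi
        · exact h2
        · rw [Finset.mem_singleton.1 hi]; exact h1⟩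
  | succ k ih =>
    intro A hA
    obtain ⟨i1, hi1⟩ := Finset.card_pos.1 (by omega : 0 < A.card)
    obtain ⟨i2, hi2⟩ := Finset.card_pos.1
      (by rw [Finset.card_erase_of_mem hi1]; omega : 0 < (A.erase i1).card)
    obtain ⟨i3, hi3⟩ := Finset.card_pos.1
      (by rw [Finset.card_erase_of_mem hi2, Finset.card_erase_of_mem hi1]; omega :
        0 < ((A.erase i1).erase i2).card)
    have h21 : i2 ≠ i1 := (Finset.mem_erase.1 hi2).1
    have h2A : i2 ∈ A := (Finset.mem_erase.1 hi2).2
    have h32 : i3 ≠ i2 := (Finset.mem_erase.1 hi3).1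
    have h31 : i3 ≠ i1 := (Finset.mem_erase.1 (Finset.mem_erase.1 hi3).2).1
    have h3A : i3 ∈ A := (Finset.mem_erase.1 (Finset.mem_erase.1 hi3).2).2
    obtain ⟨s1, hs1S, hs1⟩ := ih (A.erase i1)
      (by rw [Finset.card_erase_of_mem hi1]; omega)
    obtain ⟨s2, hs2S, hs2⟩ := ih (A.erase i2)
      (by rw [Finset.card_erase_of_mem h2A]; omega)
    obtain ⟨s3, hs3S, hs3⟩ := ih (A.erase i3)
      (by rw [Finset.card_erase_of_mem h3A]; omega)
    have ht := hcl ![s1, s2, s3] (by intro l; fin_cases l <;> simpa)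
    have e : ∀ i, (fun l => ![s1, s2, s3] l i) = ![s1 i, s2 i, s3 i] := by
      intro i; funext l; fin_cases l <;> rfl
    refine ⟨_, ht, fun i hi => ?_⟩
    show f (fun l => ![s1, s2, s3] l i) = x i
    rw [e i]
    by_cases e1 : i = i1
    · have a2 : s2 i = x i := hs2 i (Finset.mem_erase.2 ⟨e1 ▸ h21.symm, hi⟩)
      have a3 : s3 i = x i := hs3 i (Finset.mem_erase.2 ⟨e1 ▸ h31.symm, hi⟩)
      rw [a2, a3]
      exact (hf (x i) (s1 i)).2.2
    · by_cases e2 : i = i2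
      · have a1 : s1 i = x i := hs1 i (Finset.mem_erase.2 ⟨e1, hi⟩)
        have a3 : s3 i = x i := hs3 i (Finset.mem_erase.2 ⟨e2 ▸ h32.symm, hi⟩)
        rw [a1, a3]
        exact (hf (x i) (s2 i)).2.1
      · have a1 : s1 i = x i := hs1 i (Finset.mem_erase.2 ⟨e1, hi⟩)
        have a2 : s2 i = x i := hs2 i (Finset.mem_erase.2 ⟨e2, hi⟩)
        rw [a1, a2]
        exact (hf (x i) (s3 i)).1

lemma join_of_maj {n : ℕ} (hn : 2 ≤ n) {S : Set (Fin n → ℤ)} (hmaj : MajClosed S) :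
    S = joinPairs (fun i j => projSet i j S) := by
  obtain ⟨f, hf, hcl⟩ := hmaj
  ext x
  constructor
  · intro hx i j _
    exact ⟨x, hx, rfl⟩
  · intro hx
    have hx' : ∀ i j : Fin n, i < j → ∃ s ∈ S, s i = x i ∧ s j = x j := by
      intro i j hij
      obtain ⟨s, hs, he⟩ := hx i j hij
      exact ⟨s, hs, congrFun he 0, congrFun he 1⟩
    obtain ⟨s, hsS, hs⟩ := bakerPixley hf hcl x hx' (n - 2) Finset.univ
      (by simp [Finset.card_univ]; omega)
    have : s = x := funext fun i => hs i (Finset.mem_univ i)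
    exact this ▸ hsS

lemma ccc_proj {n : ℕ} (i j : Fin n) (S : Set (Fin n → ℤ)) {y : Fin n → ℝ}
    (hy : y ∈ closedConvexClosure S) :
    (![y i, y j] : Fin 2 → ℝ) ∈ closedConvexClosure (projSet i j S) := by
  set P : (Fin n → ℝ) → (Fin 2 → ℝ) := fun y => ![y i, y j] with hP
  have hPlin : ∀ (a b : ℝ) (y1 y2 : Fin n → ℝ),
      P (a • y1 + b • y2) = a • P y1 + b • P y2 := by
    intro a b y1 y2
    funext k
    fin_cases k <;> simp [hP]
  have hPcont : Continuous P := by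
    apply continuous_pi
    intro k
    fin_cases k
    · simpa [hP] using continuous_apply i
    · simpa [hP] using continuous_apply j
  have hD : (P ⁻¹' closedConvexClosure (projSet i j S)) ∈
      {C : Set (Fin n → ℝ) | Convex ℝ C ∧ IsClosed C ∧ toR '' S ⊆ C} := by
    refine ⟨?_, (ccc_closed _).preimage hPcont, ?_⟩
    · intro y1 h1 y2 h2 a b ha hb hab
      simp only [Set.mem_preimage]
      rw [hPlin]
      exact ccc_convex _ h1 h2 ha hb hab
    · rintro _ ⟨z, hz, rfl⟩
      simp only [Set.mem_preimage]
      have : P (toR z) = toR (proj2 i j z) := by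
        funext k; fin_cases k <;> simp [hP, toR, proj2]
      rw [show P (toR z) = toR (proj2 i j z) from this]
      exact subset_ccc _ ⟨proj2 i j z, ⟨z, hz, rfl⟩, rfl⟩
  exact hy _ hD

/-- 2-decomposability and the closure property induced by
`cl_conv̄(·) ∩ ℤ^n`: (ii) ⇔ (iii), (iii) ⇒ (iv), (iv) ⇒ (i). -/
theorem stmt_4 {n : ℕ} (hn : 2 ≤ n) (S : Set (Fin n → ℤ)) :
    ((MajClosed S ∧
        ∀ i j : Fin n, i < j → ClosedConvexIntegral (projSet i j S)) ↔
      (S = joinPairs (fun i j => projSet i j S) ∧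
        ∀ i j : Fin n, i < j → ClosedConvexIntegral (projSet i j S))) ∧
    ((S = joinPairs (fun i j => projSet i j S) ∧
        ∀ i j : Fin n, i < j → ClosedConvexIntegral (projSet i j S)) →
      S = joinPairs (fun i j =>
        {z : Fin 2 → ℤ | toR z ∈ closedConvexClosure (projSet i j S)})) ∧
    ((S = joinPairs (fun i j =>
        {z : Fin 2 → ℤ | toR z ∈ closedConvexClosure (projSet i j S)})) →
      (MajClosed S ∧ ClosedConvexIntegral S)) := by
  have hFmed : ∀ i j : Fin n, ∀ p ∈ {z : Fin 2 → ℤ | toR z ∈ closedConvexClosure (projSet i j S)},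
      ∀ q ∈ {z : Fin 2 → ℤ | toR z ∈ closedConvexClosure (projSet i j S)},
      ∀ r ∈ {z : Fin 2 → ℤ | toR z ∈ closedConvexClosure (projSet i j S)},
      (fun k => medianOp ![p k, q k, r k]) ∈
        {z : Fin 2 → ℤ | toR z ∈ closedConvexClosure (projSet i j S)} := by
    intro i j p hp q hq r hr
    exact medianOp_mem_of_convex (ccc_convex _) hp hq hr
  refine ⟨⟨fun ⟨hmaj, hcci⟩ => ⟨join_of_maj hn hmaj, hcci⟩, fun ⟨hjoin, hcci⟩ => ⟨?_, hcci⟩⟩,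
    fun ⟨hjoin, hcci⟩ => ?_, fun hjoin => ⟨?_, ?_⟩⟩
  · -- (iii) → MajClosed via median
    refine majClosed_of_join hjoin ?_
    intro i j hij p hp q hq r hr
    have hset : projSet i j S = {z : Fin 2 → ℤ | toR z ∈ closedConvexClosure (projSet i j S)} :=
      hcci i j hij
    rw [hset] at hp hq hr ⊢
    exact hFmed i j p hp q hq r hr
  · -- (iii) → (iv)
    conv_lhs => rw [hjoin]
    ext x
    simp only [joinPairs, Set.mem_setOf_eq]
    refine forall_congr' fun i => forall_congr' fun j => ?_
    constructor
    · intro h hij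
      have hset : projSet i j S = _ := hcci i j hij
      have := h hij
      rw [hset] at this
      exact this
    · intro h hij
      have hset : projSet i j S = _ := hcci i j hij
      rw [hset]
      exact h hij
  · -- (iv) → MajClosed
    exact majClosed_of_join hjoin (fun i j _ => hFmed i j)
  · -- (iv) → ClosedConvexIntegral S
    apply Set.Subset.antisymm
    · intro z hz
      exact subset_ccc S ⟨z, hz, rfl⟩
    · intro z hz
      rw [hjoin]
      intro i j hij
      have := ccc_proj i j S hz
      have e : (![toR z i, toR z j] : Fin 2 → ℝ) = toR (proj2 i j z) := by
        funext k; fin_cases k <;> simp [toR, proj2]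
      rw [e] at this
      exact this
end

section
/- Let n ≥ 2 and S ⊆ ℤ^n. Then S is representable by an SVPI system if and only if S is midpoint-neighbor-closed. -/
section AuxMNC

variable {n : ℕ} {S : Set (Fin n → ℤ)}

lemma mnc_int (hS : MidpointNeighborClosed S) {x y z : Fin n → ℤ}
    (hx : x ∈ S) (hy : y ∈ S) (hz : ∀ j, |2 * z j - x j - y j| ≤ 1) : z ∈ S := by
  refine hS x hx y hy z fun j => ?_
  have h := hz j
  have h' : |((2 * z j - x j - y j : ℤ) : ℝ)| ≤ 1 := by
    rw [← Int.cast_abs]; exact_mod_cast h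
  have e : ((z j : ℝ) - ((x j : ℝ) + (y j : ℝ)) / 2) = ((2 * z j - x j - y j : ℤ) : ℝ) / 2 := by
    push_cast; ring
  rw [e, abs_div]
  have h2 : |(2:ℝ)| = 2 := by norm_num
  rw [h2]
  linarith

lemma mixAux (hS : MidpointNeighborClosed S) :
    ∀ d : ℕ, ∀ x ∈ S, ∀ y ∈ S, (∀ j, |x j - y j| ≤ (d : ℤ)) →
      ∀ w : Fin n → ℤ, (∀ j, w j = x j ∨ w j = y j) → w ∈ S := by
  intro d
  induction d using Nat.strong_induction_on with
  | _ d ih =>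
    intro x hx y hy hd w hw
    rcases le_or_gt d 1 with h1 | h1
    · refine mnc_int hS hx hy fun j => ?_
      have h := hd j
      rw [abs_le] at h ⊢
      rcases hw j with h' | h' <;> rw [h'] <;> constructor <;> omega
    · set d' : ℕ := (d + 1) / 2 with hd'
      have hlt : d' < d := by omega
      set m : Fin n → ℤ := fun j => x j + (y j - x j) / 2 with hm
      have hmS : m ∈ S := by
        refine mnc_int hS hx hy fun j => ?_
        simp only [hm, abs_le]; omega
      have hxm : ∀ j, |x j - m j| ≤ (d' : ℤ) := by
        intro j; have h := hd j; simp only [abs_le] at h; simp only [hm, abs_le]; omega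
      have hmy : ∀ j, |m j - y j| ≤ (d' : ℤ) := by
        intro j; have h := hd j; simp only [abs_le] at h; simp only [hm, abs_le]; omega
      set w1 : Fin n → ℤ := fun j => if w j = x j then x j else m j with hw1d
      set w2 : Fin n → ℤ := fun j => if w j = x j then m j else y j with hw2d
      have hw1 : w1 ∈ S := by
        refine ih d' hlt x hx m hmS hxm w1 fun j => ?_
        rw [hw1d]; by_cases h : w j = x j <;> simp [h]
      have hw2 : w2 ∈ S := by
        refine ih d' hlt m hmS y hy hmy w2 fun j => ?_
        rw [hw2d]; by_cases h : w j = x j <;> simp [h]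
      refine ih d' hlt w1 hw1 w2 hw2 (fun j => ?_) w (fun j => ?_)
      · rw [hw1d, hw2d]
        by_cases h : w j = x j <;> simp only [h, if_true, if_false, if_pos, if_neg, not_false_iff]
        · exact hxm j
        · exact hmy j
      · rw [hw1d, hw2d]
        by_cases h : w j = x j
        · left; simp [h]
        · right; simp only [h, if_neg, if_false, not_false_iff]
          rcases hw j with h' | h'
          · exact absurd h' h
          · exact h'

lemma mixLem (hS : MidpointNeighborClosed S) {x y w : Fin n → ℤ}
    (hx : x ∈ S) (hy : y ∈ S) (hw : ∀ j, w j = x j ∨ w j = y j) : w ∈ S := by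
  refine mixAux hS (Finset.univ.sup fun j => (x j - y j).natAbs) x hx y hy (fun j => ?_) w hw
  have h := Finset.le_sup (f := fun j => (x j - y j).natAbs) (Finset.mem_univ j)
  rw [Int.abs_eq_natAbs]
  exact_mod_cast h

lemma btwAux (hS : MidpointNeighborClosed S) :
    ∀ d : ℕ, ∀ x ∈ S, ∀ y ∈ S, (∀ j, |x j - y j| ≤ (d : ℤ)) →
      ∀ z : Fin n → ℤ, (∀ j, (x j ≤ z j ∧ z j ≤ y j) ∨ (y j ≤ z j ∧ z j ≤ x j)) → z ∈ S := by
  intro d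
  induction d using Nat.strong_induction_on with
  | _ d ih =>
    intro x hx y hy hd z hz
    rcases le_or_gt d 1 with h1 | h1
    · refine mnc_int hS hx hy fun j => ?_
      have h := hd j; have h' := hz j
      rw [abs_le] at h ⊢; constructor <;> omega
    · set d' : ℕ := (d + 1) / 2 with hd'
      have hlt : d' < d := by omega
      set m : Fin n → ℤ := fun j => x j + (y j - x j) / 2 with hm
      have hmS : m ∈ S := by
        refine mnc_int hS hx hy fun j => ?_
        simp only [hm, abs_le]; omega
      have hxm : ∀ j, |x j - m j| ≤ (d' : ℤ) := by
        intro j; have h := hd j; simp only [abs_le] at h; simp only [hm, abs_le]; omega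
      have hmy : ∀ j, |m j - y j| ≤ (d' : ℤ) := by
        intro j; have h := hd j; simp only [abs_le] at h; simp only [hm, abs_le]; omega
      have hmb : ∀ j, (x j ≤ m j ∧ m j ≤ y j) ∨ (y j ≤ m j ∧ m j ≤ x j) := by
        intro j; simp only [hm]; omega
      set z1 : Fin n → ℤ := fun j => min (max (z j) (min (x j) (m j))) (max (x j) (m j)) with hz1d
      set z2 : Fin n → ℤ := fun j => min (max (z j) (min (m j) (y j))) (max (m j) (y j)) with hz2d
      have hz1 : z1 ∈ S := by
        refine ih d' hlt x hx m hmS hxm z1 fun j => ?_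
        simp only [hz1d]; omega
      have hz2 : z2 ∈ S := by
        refine ih d' hlt m hmS y hy hmy z2 fun j => ?_
        simp only [hz2d]; omega
      refine mixLem hS hz1 hz2 fun j => ?_
      have h1 := hz j; have h2 := hmb j
      simp only [hz1d, hz2d]; omega

lemma btwLem (hS : MidpointNeighborClosed S) {x y z : Fin n → ℤ}
    (hx : x ∈ S) (hy : y ∈ S)
    (hz : ∀ j, (x j ≤ z j ∧ z j ≤ y j) ∨ (y j ≤ z j ∧ z j ≤ x j)) : z ∈ S := by
  refine btwAux hS (Finset.univ.sup fun j => (x j - y j).natAbs) x hx y hy (fun j => ?_) z hz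
  have h := Finset.le_sup (f := fun j => (x j - y j).natAbs) (Finset.mem_univ j)
  rw [Int.abs_eq_natAbs]
  exact_mod_cast h

lemma combineLem (hS : MidpointNeighborClosed S) (hne : S.Nonempty) (z : Fin n → ℤ)
    (hz : ∀ j, ∃ s ∈ S, s j = z j) : z ∈ S := by
  obtain ⟨s0, hs0⟩ := hne
  have main : ∀ k : ℕ, k ≤ n → ∃ w ∈ S, ∀ j : Fin n, (j : ℕ) < k → w j = z j := by
    intro k
    induction k with
    | zero => exact fun _ => ⟨s0, hs0, fun j hj => absurd hj (by omega)⟩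
    | succ k ih =>
      intro hk
      obtain ⟨w, hwS, hwz⟩ := ih (by omega)
      obtain ⟨s, hsS, hsz⟩ := hz ⟨k, by omega⟩
      refine ⟨fun j => if (j : ℕ) < k then w j else s j, ?_, ?_⟩
      · exact mixLem hS hwS hsS fun j => by by_cases h : (j:ℕ) < k <;> simp [h]
      · intro j hj
        by_cases h : (j : ℕ) < k
        · simp only [h, if_true]; exact hwz j h
        · have hjk : j = (⟨k, by omega⟩ : Fin n) := Fin.ext (show (j:ℕ) = k by omega)
          simp only [h, if_false]
          rw [hjk]; exact hsz
  obtain ⟨w, hwS, hwz⟩ := main n le_rfl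
  have hw : w = z := funext fun j => hwz j j.isLt
  rwa [← hw]

lemma intervalLem (hS : MidpointNeighborClosed S) {j : Fin n} {t1 t2 t : ℤ}
    (h1 : ∃ s ∈ S, s j = t1) (h2 : ∃ s ∈ S, s j = t2) (hle1 : t1 ≤ t) (hle2 : t ≤ t2) :
    ∃ s ∈ S, s j = t := by
  obtain ⟨s1, hs1, hs1j⟩ := h1
  obtain ⟨s2, hs2, hs2j⟩ := h2
  refine ⟨Function.update s1 j t, ?_, Function.update_self j t s1⟩
  refine btwLem hS hs1 hs2 fun i => ?_
  by_cases h : i = j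
  · subst h; rw [Function.update_self]; omega
  · rw [Function.update_of_ne h]; omega

end AuxMNC

/-- `S` is representable by an SVPI system iff `S` is
midpoint-neighbor-closed. -/
theorem stmt_6 {n : ℕ} (hn : 2 ≤ n) (S : Set (Fin n → ℤ)) :
    RepSVPI S ↔ MidpointNeighborClosed S := by
  constructor
  · rintro ⟨mR, A, b, hU, hrow, rfl⟩
    intro x hx y hy z hz i
    by_cases hT : ∀ j, A i j = 0
    · have e : (∑ j, A i j * z j) = 0 := Finset.sum_eq_zero fun j _ => by rw [hT j, zero_mul]
      have e2 : (∑ j, A i j * x j) = 0 := Finset.sum_eq_zero fun j _ => by rw [hT j, zero_mul]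
      have hx' := hx i
      rw [e2] at hx'
      rw [e]
      exact hx'
    · push_neg at hT
      obtain ⟨j0, hj0⟩ := hT
      have huniq : ∀ j, A i j ≠ 0 → j = j0 := fun j hj =>
        (Set.ncard_le_one (Set.toFinite _)).mp (hrow i) j hj j0 hj0
      have e : ∀ w : Fin n → ℤ, (∑ j, A i j * w j) = A i j0 * w j0 := by
        intro w
        refine Finset.sum_eq_single_of_mem j0 (Finset.mem_univ j0) fun j _ hne => ?_
        have hz0 : A i j = 0 := by by_contra h; exact hne (huniq j h)
        rw [hz0, zero_mul]
      have hx' := hx i; have hy' := hy i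
      rw [e] at hx' hy'
      rw [e]
      have hzj := hz j0
      have habs : |2 * z j0 - x j0 - y j0| ≤ 1 := by
        have e2 : ((2 * z j0 - x j0 - y j0 : ℤ) : ℝ)
            = 2 * ((z j0 : ℝ) - ((x j0 : ℝ) + (y j0 : ℝ)) / 2) := by push_cast; ring
        have hlt : |((2 * z j0 - x j0 - y j0 : ℤ) : ℝ)| < 2 := by
          rw [e2, abs_mul, abs_two]; linarith [abs_nonneg ((z j0 : ℝ) - ((x j0:ℝ) + (y j0:ℝ)) / 2)]
        rw [← Int.cast_abs] at hlt
        have : |2 * z j0 - x j0 - y j0| < 2 := by exact_mod_cast hlt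
        omega
      have key : min (A i j0 * x j0) (A i j0 * y j0) ≤ A i j0 * z j0 := by
        rcases hU i j0 with h | h | h
        · exact absurd h hj0
        · rw [abs_le] at habs; rw [h]; omega
        · rw [abs_le] at habs; rw [h]; omega
      calc b i ≤ ((min (A i j0 * x j0) (A i j0 * y j0) : ℤ) : ℝ) := by
            rcases le_total (A i j0 * x j0) (A i j0 * y j0) with h | h
            · rw [min_eq_left h]; exact hx'
            · rw [min_eq_right h]; exact hy'
        _ ≤ ((A i j0 * z j0 : ℤ) : ℝ) := by exact_mod_cast key
  · intro hS
    by_cases hem : S = ∅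
    · subst hem
      refine ⟨1, fun _ _ => 0, fun _ => 1, fun i j => Or.inl rfl, fun i => ?_, ?_⟩
      · have hset : {j : Fin n | (0:ℤ) ≠ 0} = ∅ := by simp
        simpa [hset] using Nat.zero_le 1
      · ext x
        simp only [Set.mem_empty_iff_false, Set.mem_setOf_eq, false_iff]
        intro h
        have h0 := h 0
        simp only [zero_mul, Finset.sum_const_zero, Int.cast_zero] at h0
        exact absurd h0 (by norm_num)
    · obtain ⟨s0, hs0⟩ := Set.nonempty_iff_ne_empty.mpr hem
      have key_low : ∀ j : Fin n, ∃ (r : Fin n → ℤ) (c : ℝ),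
          (∀ i, r i = 0 ∨ r i = 1) ∧ {i | r i ≠ 0}.ncard ≤ 1 ∧
          (∀ x ∈ S, c ≤ ((∑ i, r i * x i : ℤ) : ℝ)) ∧
          (∀ x : Fin n → ℤ, c ≤ ((∑ i, r i * x i : ℤ) : ℝ) →
            ∃ t, (∃ s ∈ S, s j = t) ∧ t ≤ x j) := by
        intro j
        by_cases hb : ∃ L : ℤ, ∀ t : ℤ, (∃ s ∈ S, s j = t) → L ≤ t
        · obtain ⟨L, hL1, hL2⟩ := Int.exists_least_of_bdd hb ⟨s0 j, s0, hs0, rfl⟩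
          have hsum : ∀ x : Fin n → ℤ, (∑ i, (if i = j then (1:ℤ) else 0) * x i) = x j := by
            intro x; simp
          refine ⟨fun i => if i = j then 1 else 0, (L : ℝ),
            fun i => by by_cases h : i = j <;> simp [h], ?_, ?_, ?_⟩
          · have hset : {i : Fin n | (if i = j then (1:ℤ) else 0) ≠ 0} = {j} := by
              ext i; by_cases h : i = j <;> simp [h]
            rw [hset, Set.ncard_singleton]
          · intro x hx
            rw [hsum x]
            exact_mod_cast hL2 (x j) ⟨x, hx, rfl⟩
          · intro x hx
            rw [hsum x] at hx
            exact ⟨L, hL1, by exact_mod_cast hx⟩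
        · refine ⟨fun _ => 0, 0, fun i => Or.inl rfl, ?_, ?_, ?_⟩
          · have hset : {i : Fin n | (0:ℤ) ≠ 0} = ∅ := by simp
            rw [hset, Set.ncard_empty]
            exact Nat.zero_le 1
          · intro x _
            simp
          · intro x _
            push_neg at hb
            obtain ⟨t, ht, htl⟩ := hb (x j)
            exact ⟨t, ht, le_of_lt htl⟩
      have key_up : ∀ j : Fin n, ∃ (r : Fin n → ℤ) (c : ℝ),
          (∀ i, r i = 0 ∨ r i = -1) ∧ {i | r i ≠ 0}.ncard ≤ 1 ∧
          (∀ x ∈ S, c ≤ ((∑ i, r i * x i : ℤ) : ℝ)) ∧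
          (∀ x : Fin n → ℤ, c ≤ ((∑ i, r i * x i : ℤ) : ℝ) →
            ∃ t, (∃ s ∈ S, s j = t) ∧ x j ≤ t) := by
        intro j
        by_cases hb : ∃ U : ℤ, ∀ t : ℤ, (∃ s ∈ S, s j = t) → t ≤ U
        · obtain ⟨U, hU1', hU2'⟩ := Int.exists_greatest_of_bdd hb ⟨s0 j, s0, hs0, rfl⟩
          have hsum : ∀ x : Fin n → ℤ, (∑ i, (if i = j then (-1:ℤ) else 0) * x i) = -(x j) := by
            intro x; simp
          refine ⟨fun i => if i = j then -1 else 0, ((-U : ℤ) : ℝ),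
            fun i => by by_cases h : i = j <;> simp [h], ?_, ?_, ?_⟩
          · have hset : {i : Fin n | (if i = j then (-1:ℤ) else 0) ≠ 0} = {j} := by
              ext i; by_cases h : i = j <;> simp [h]
            rw [hset, Set.ncard_singleton]
          · intro x hx
            rw [hsum x]
            have : x j ≤ U := hU2' (x j) ⟨x, hx, rfl⟩
            exact_mod_cast neg_le_neg this
          · intro x hx
            rw [hsum x] at hx
            have : -U ≤ -(x j) := by exact_mod_cast hx
            exact ⟨U, hU1', by omega⟩
        · refine ⟨fun _ => 0, 0, fun i => Or.inl rfl, ?_, ?_, ?_⟩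
          · have hset : {i : Fin n | (0:ℤ) ≠ 0} = ∅ := by simp
            rw [hset, Set.ncard_empty]
            exact Nat.zero_le 1
          · intro x _
            simp
          · intro x _
            push_neg at hb
            obtain ⟨t, ht, htl⟩ := hb (x j)
            exact ⟨t, ht, le_of_lt htl⟩
      choose rL cL hL1 hL2 hL3 hL4 using key_low
      choose rU cU hUu1 hUu2 hUu3 hUu4 using key_up
      set A : Matrix (Fin (2*n)) (Fin n) ℤ := fun i k =>
        if h : (i:ℕ) < n then rL ⟨i, h⟩ k else rU ⟨(i:ℕ) - n, by have := i.isLt; omega⟩ k with hA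
      set bb : Fin (2*n) → ℝ := fun i =>
        if h : (i:ℕ) < n then cL ⟨i, h⟩ else cU ⟨(i:ℕ) - n, by have := i.isLt; omega⟩ with hbb
      have hAlow : ∀ (N : ℕ) (pf : N < 2*n) (j : Fin n), (j:ℕ) = N →
          (∀ k, A ⟨N, pf⟩ k = rL j k) ∧ bb ⟨N, pf⟩ = cL j := by
        intro N pf j hj
        have hNn : N < n := by have := j.isLt; omega
        have hjeq : (⟨N, hNn⟩ : Fin n) = j := Fin.ext (by simp [hj])
        constructor
        · intro k
          simp only [hA]
          rw [dif_pos hNn, hjeq]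
        · simp only [hbb]
          rw [dif_pos hNn, hjeq]
      have hAhigh : ∀ (N : ℕ) (pf : N < 2*n) (j : Fin n), ¬ N < n → (j:ℕ) = N - n →
          (∀ k, A ⟨N, pf⟩ k = rU j k) ∧ bb ⟨N, pf⟩ = cU j := by
        intro N pf j hN hj
        have hjeq : (⟨N - n, by omega⟩ : Fin n) = j := Fin.ext (by simp [hj])
        constructor
        · intro k
          simp only [hA]
          rw [dif_neg hN, hjeq]
        · simp only [hbb]
          rw [dif_neg hN, hjeq]
      refine ⟨2*n, A, bb, ?_, ?_, ?_⟩
      · intro i k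
        by_cases h : (i:ℕ) < n
        · rw [show A i k = rL ⟨(i:ℕ), h⟩ k from (hAlow (i:ℕ) i.isLt ⟨(i:ℕ), h⟩ rfl).1 k]
          rcases hL1 ⟨(i:ℕ), h⟩ k with h' | h'
          · exact Or.inl h'
          · exact Or.inr (Or.inr h')
        · have hj : ((⟨(i:ℕ) - n, by have := i.isLt; omega⟩ : Fin n) : ℕ) = (i:ℕ) - n := rfl
          rw [show A i k = rU ⟨(i:ℕ) - n, by have := i.isLt; omega⟩ k from
            (hAhigh (i:ℕ) i.isLt _ h hj).1 k]
          rcases hUu1 _ k with h' | h'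
          · exact Or.inl h'
          · exact Or.inr (Or.inl h')
      · intro i
        by_cases h : (i:ℕ) < n
        · have hset : {k | A i k ≠ 0} = {k | rL ⟨(i:ℕ), h⟩ k ≠ 0} := by
            ext k
            simp only [Set.mem_setOf_eq,
              show A i k = rL ⟨(i:ℕ), h⟩ k from (hAlow (i:ℕ) i.isLt ⟨(i:ℕ), h⟩ rfl).1 k]
          rw [hset]
          exact hL2 _
        · have hj : ((⟨(i:ℕ) - n, by have := i.isLt; omega⟩ : Fin n) : ℕ) = (i:ℕ) - n := rfl
          have hset : {k | A i k ≠ 0} = {k | rU ⟨(i:ℕ) - n, by have := i.isLt; omega⟩ k ≠ 0} := by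
            ext k
            simp only [Set.mem_setOf_eq,
              show A i k = rU ⟨(i:ℕ) - n, by have := i.isLt; omega⟩ k from
                (hAhigh (i:ℕ) i.isLt _ h hj).1 k]
          rw [hset]
          exact hUu2 _
      · ext x
        simp only [Set.mem_setOf_eq]
        constructor
        · intro hx i
          by_cases h : (i:ℕ) < n
          · have e1 : (∑ k, A i k * x k) = ∑ k, rL ⟨(i:ℕ), h⟩ k * x k :=
              Finset.sum_congr rfl fun k _ => by
                rw [show A i k = rL ⟨(i:ℕ), h⟩ k from (hAlow (i:ℕ) i.isLt ⟨(i:ℕ), h⟩ rfl).1 k]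
            rw [e1, show bb i = cL ⟨(i:ℕ), h⟩ from (hAlow (i:ℕ) i.isLt ⟨(i:ℕ), h⟩ rfl).2]
            exact hL3 _ x hx
          · have hj : ((⟨(i:ℕ) - n, by have := i.isLt; omega⟩ : Fin n) : ℕ) = (i:ℕ) - n := rfl
            have e1 : (∑ k, A i k * x k) = ∑ k, rU ⟨(i:ℕ) - n, by have := i.isLt; omega⟩ k * x k :=
              Finset.sum_congr rfl fun k _ => by
                rw [show A i k = rU ⟨(i:ℕ) - n, by have := i.isLt; omega⟩ k from
                  (hAhigh (i:ℕ) i.isLt _ h hj).1 k]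
            rw [e1, show bb i = cU ⟨(i:ℕ) - n, by have := i.isLt; omega⟩ from
              (hAhigh (i:ℕ) i.isLt _ h hj).2]
            exact hUu3 _ x hx
        · intro hx
          refine combineLem hS ⟨s0, hs0⟩ x fun j => ?_
          have pf1 : (j:ℕ) < 2*n := by have := j.isLt; omega
          have pf2 : n + (j:ℕ) < 2*n := by have := j.isLt; omega
          obtain ⟨hAe1, hbe1⟩ := hAlow (j:ℕ) pf1 j rfl
          obtain ⟨hAe2, hbe2⟩ := hAhigh (n + (j:ℕ)) pf2 j (by omega) (by omega)
          have h1 := hx ⟨(j:ℕ), pf1⟩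
          have h2 := hx ⟨n + (j:ℕ), pf2⟩
          rw [hbe1, Finset.sum_congr rfl fun k _ => by rw [hAe1 k]] at h1
          rw [hbe2, Finset.sum_congr rfl fun k _ => by rw [hAe2 k]] at h2
          obtain ⟨t1, ht1, ht1le⟩ := hL4 j x h1
          obtain ⟨t2, ht2, ht2le⟩ := hUu4 j x h2
          exact intervalLem hS ht1 ht2 ht1le ht2le
end

section
/- Let n ≥ 2 and S ⊆ ℤ^n. The following are equivalent: (a) S is representable by a DC system; (b) S is closed under both g(x,y) = ⌈(x+y)/2⌉ and h(x,y) = ⌊(x+y)/2⌋; (c) S = ⋈_{1≤i<j≤n} cl_{g,h}(π_{i,j}(S)), where cl_{g,h}(T) denotes the smallest superset of T ⊆ ℤ² that is closed under both g and h. -/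
/-- The `{g,h}`-closure of `T ⊆ ℤ²`: the smallest superset of `T` closed under both
`g(x,y) = ⌈(x+y)/2⌉` and `h(x,y) = ⌊(x+y)/2⌋`. -/
def clGH (T : Set (Fin 2 → ℤ)) : Set (Fin 2 → ℤ) :=
  ⋂₀ {U | T ⊆ U ∧ CptClosed ceilAvgOp U ∧ CptClosed floorAvgOp U}



def muG (a b : ℤ) : ℤ := ⌈((a + b : ℤ) : ℚ) / 2⌉
def muH (a b : ℤ) : ℤ := ⌊((a + b : ℤ) : ℚ) / 2⌋

lemma muG_char (a b : ℤ) : 2 * muG a b - 1 ≤ a + b ∧ a + b ≤ 2 * muG a b := by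
  unfold muG
  constructor
  · have h := Int.ceil_lt_add_one (((a + b : ℤ) : ℚ) / 2)
    have : (2 * ⌈((a + b : ℤ) : ℚ) / 2⌉ : ℚ) < (a + b : ℤ) + 2 := by rw [mul_comm]; nlinarith
    have : (2 * ⌈((a + b : ℤ) : ℚ) / 2⌉ : ℤ) < (a + b) + 2 := by exact_mod_cast this
    omega
  · have h := Int.le_ceil (((a + b : ℤ) : ℚ) / 2)
    have : ((a + b : ℤ) : ℚ) ≤ 2 * ⌈((a + b : ℤ) : ℚ) / 2⌉ := by nlinarith
    exact_mod_cast this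

lemma muH_char (a b : ℤ) : 2 * muH a b ≤ a + b ∧ a + b ≤ 2 * muH a b + 1 := by
  unfold muH
  constructor
  · have h := Int.floor_le (((a + b : ℤ) : ℚ) / 2)
    have : (2 * ⌊((a + b : ℤ) : ℚ) / 2⌋ : ℚ) ≤ (a + b : ℤ) := by nlinarith
    exact_mod_cast this
  · have h := Int.lt_floor_add_one (((a + b : ℤ) : ℚ) / 2)
    have : ((a + b : ℤ) : ℚ) < 2 * ⌊((a + b : ℤ) : ℚ) / 2⌋ + 2 := by nlinarith
    have : (a + b) < 2 * ⌊((a + b : ℤ) : ℚ) / 2⌋ + 2 := by exact_mod_cast this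
    omega

section Moves
variable {n : ℕ} {S : Set (Fin n → ℤ)}

lemma memG (hg : CptClosed ceilAvgOp S) {u v : Fin n → ℤ} (hu : u ∈ S) (hv : v ∈ S) :
    (fun i => muG (u i) (v i)) ∈ S := by
  have h := hg ![u, v] (by intro l; fin_cases l <;> simpa)
  exact h

lemma memH (hh : CptClosed floorAvgOp S) {u v : Fin n → ℤ} (hu : u ∈ S) (hv : v ∈ S) :
    (fun i => muH (u i) (v i)) ∈ S := by
  have h := hh ![u, v] (by intro l; fin_cases l <;> simpa)
  exact h

lemma moveUp (hg : CptClosed ceilAvgOp S) {s t : Fin n → ℤ} (hs : s ∈ S) (ht : t ∈ S) :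
    (fun i => s i + if s i < t i then 1 else 0) ∈ S := by
  set c : Fin n → ℤ := fun i => s i + if s i < t i then 1 else 0 with hc
  set step : (Fin n → ℤ) → (Fin n → ℤ) := fun v i => muG (s i) (v i) with hstep
  have key : ∀ m : ℕ, step^[m] t ∈ S ∧
      ∀ i, (s i < step^[m] t i ↔ s i < t i) ∧
        (step^[m] t i - c i).natAbs ≤ (t i - c i).natAbs - m := by
    intro m; induction m with
    | zero => exact ⟨ht, fun i => ⟨Iff.rfl, by simp⟩⟩
    | succ m ih =>
      rw [Function.iterate_succ_apply']
      refine ⟨memG hg hs ih.1, fun i => ?_⟩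
      have hv : step (step^[m] t) i = muG (s i) (step^[m] t i) := rfl
      rw [hv]
      have h1 := muG_char (s i) (step^[m] t i)
      obtain ⟨h2a, h2b⟩ := ih.2 i
      have hc' : c i = s i + if s i < t i then 1 else 0 := rfl
      by_cases hlt : s i < t i
      · rw [if_pos hlt] at hc'; omega
      · rw [if_neg hlt] at hc'; omega
  obtain ⟨hmem, hinv⟩ := key (Finset.univ.sup fun i => (t i - c i).natAbs)
  have : step^[Finset.univ.sup fun i => (t i - c i).natAbs] t = c := by
    funext i
    have h := (hinv i).2
    have hle : (t i - c i).natAbs ≤ Finset.univ.sup fun i => (t i - c i).natAbs :=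
      Finset.le_sup (f := fun i => (t i - c i).natAbs) (Finset.mem_univ i)
    omega
  rwa [this] at hmem

lemma moveDown (hh : CptClosed floorAvgOp S) {s t : Fin n → ℤ} (hs : s ∈ S) (ht : t ∈ S) :
    (fun i => s i - if t i < s i then 1 else 0) ∈ S := by
  set c : Fin n → ℤ := fun i => s i - if t i < s i then 1 else 0 with hc
  set step : (Fin n → ℤ) → (Fin n → ℤ) := fun v i => muH (s i) (v i) with hstep
  have key : ∀ m : ℕ, step^[m] t ∈ S ∧
      ∀ i, (step^[m] t i < s i ↔ t i < s i) ∧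
        (step^[m] t i - c i).natAbs ≤ (t i - c i).natAbs - m := by
    intro m; induction m with
    | zero => exact ⟨ht, fun i => ⟨Iff.rfl, by simp⟩⟩
    | succ m ih =>
      rw [Function.iterate_succ_apply']
      refine ⟨memH hh hs ih.1, fun i => ?_⟩
      have hv : step (step^[m] t) i = muH (s i) (step^[m] t i) := rfl
      rw [hv]
      have h1 := muH_char (s i) (step^[m] t i)
      obtain ⟨h2a, h2b⟩ := ih.2 i
      have hc' : c i = s i - if t i < s i then 1 else 0 := rfl
      by_cases hlt : t i < s i
      · rw [if_pos hlt] at hc'; omega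
      · rw [if_neg hlt] at hc'; omega
  obtain ⟨hmem, hinv⟩ := key (Finset.univ.sup fun i => (t i - c i).natAbs)
  have : step^[Finset.univ.sup fun i => (t i - c i).natAbs] t = c := by
    funext i
    have h := (hinv i).2
    have hle : (t i - c i).natAbs ≤ Finset.univ.sup fun i => (t i - c i).natAbs :=
      Finset.le_sup (f := fun i => (t i - c i).natAbs) (Finset.mem_univ i)
    omega
  rwa [this] at hmem

end Moves

section Moves2
variable {n : ℕ} {S : Set (Fin n → ℤ)}

lemma maxMem (hg : CptClosed ceilAvgOp S) {x y : Fin n → ℤ} (hx : x ∈ S) (hy : y ∈ S) :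
    (fun i => max (x i) (y i)) ∈ S := by
  set step : (Fin n → ℤ) → (Fin n → ℤ) := fun v i => v i + if v i < y i then 1 else 0 with hstep
  have key : ∀ m : ℕ, step^[m] x ∈ S ∧ ∀ i, x i ≤ step^[m] x i ∧ step^[m] x i ≤ max (x i) (y i) ∧
      (max (x i) (y i) - step^[m] x i).natAbs ≤ (max (x i) (y i) - x i).natAbs - m := by
    intro m; induction m with
    | zero =>
      refine ⟨hx, fun i => ⟨le_rfl, le_max_left _ _, by simp⟩⟩
    | succ m ih =>
      rw [Function.iterate_succ_apply']
      refine ⟨moveUp hg ih.1 hy, fun i => ?_⟩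
      have hv : step (step^[m] x) i = step^[m] x i + if step^[m] x i < y i then 1 else 0 := rfl
      rw [hv]
      obtain ⟨h1, h2, h3⟩ := ih.2 i
      have hm1 : x i ≤ max (x i) (y i) := le_max_left _ _
      have hm2 : y i ≤ max (x i) (y i) := le_max_right _ _
      have hm3 : max (x i) (y i) = x i ∨ max (x i) (y i) = y i := max_choice _ _
      by_cases hlt : step^[m] x i < y i
      · rw [if_pos hlt]; omega
      · rw [if_neg hlt]; omega
  obtain ⟨hmem, hinv⟩ := key (Finset.univ.sup fun i => (max (x i) (y i) - x i).natAbs)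
  have : step^[Finset.univ.sup fun i => (max (x i) (y i) - x i).natAbs] x
      = fun i => max (x i) (y i) := by
    funext i
    obtain ⟨h1, h2, h3⟩ := hinv i
    have hle : (max (x i) (y i) - x i).natAbs ≤
        Finset.univ.sup fun i => (max (x i) (y i) - x i).natAbs :=
      Finset.le_sup (f := fun i => (max (x i) (y i) - x i).natAbs) (Finset.mem_univ i)
    omega
  rwa [this] at hmem

lemma minMem (hh : CptClosed floorAvgOp S) {x y : Fin n → ℤ} (hx : x ∈ S) (hy : y ∈ S) :
    (fun i => min (x i) (y i)) ∈ S := by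
  set step : (Fin n → ℤ) → (Fin n → ℤ) := fun v i => v i - if y i < v i then 1 else 0 with hstep
  have key : ∀ m : ℕ, step^[m] x ∈ S ∧ ∀ i, step^[m] x i ≤ x i ∧ min (x i) (y i) ≤ step^[m] x i ∧
      (step^[m] x i - min (x i) (y i)).natAbs ≤ (x i - min (x i) (y i)).natAbs - m := by
    intro m; induction m with
    | zero =>
      refine ⟨hx, fun i => ⟨le_rfl, min_le_left _ _, by simp⟩⟩
    | succ m ih =>
      rw [Function.iterate_succ_apply']
      refine ⟨moveDown hh ih.1 hy, fun i => ?_⟩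
      have hv : step (step^[m] x) i = step^[m] x i - if y i < step^[m] x i then 1 else 0 := rfl
      rw [hv]
      obtain ⟨h1, h2, h3⟩ := ih.2 i
      have hm1 : min (x i) (y i) ≤ x i := min_le_left _ _
      have hm2 : min (x i) (y i) ≤ y i := min_le_right _ _
      have hm3 : min (x i) (y i) = x i ∨ min (x i) (y i) = y i := min_choice _ _
      by_cases hlt : y i < step^[m] x i
      · rw [if_pos hlt]; omega
      · rw [if_neg hlt]; omega
  obtain ⟨hmem, hinv⟩ := key (Finset.univ.sup fun i => (x i - min (x i) (y i)).natAbs)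
  have : step^[Finset.univ.sup fun i => (x i - min (x i) (y i)).natAbs] x
      = fun i => min (x i) (y i) := by
    funext i
    obtain ⟨h1, h2, h3⟩ := hinv i
    have hle : (x i - min (x i) (y i)).natAbs ≤
        Finset.univ.sup fun i => (x i - min (x i) (y i)).natAbs :=
      Finset.le_sup (f := fun i => (x i - min (x i) (y i)).natAbs) (Finset.mem_univ i)
    omega
  rwa [this] at hmem

lemma existsAbove (hg : CptClosed ceilAvgOp S) (h0 : S.Nonempty) (z : Fin n → ℤ)
    (hw : ∀ i, ∃ s ∈ S, z i ≤ s i) : ∃ s ∈ S, ∀ i, z i ≤ s i := by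
  have main : ∀ F : Finset (Fin n), ∃ s ∈ S, ∀ i ∈ F, z i ≤ s i := by
    intro F
    induction F using Finset.induction with
    | empty => exact ⟨h0.choose, h0.choose_spec, by simp⟩
    | @insert a F _ ih =>
      obtain ⟨s, hs, hF⟩ := ih
      obtain ⟨t, ht, hta⟩ := hw a
      refine ⟨fun i => max (s i) (t i), maxMem hg hs ht, fun i hi => ?_⟩
      rcases Finset.mem_insert.mp hi with h | h
      · subst h; exact le_trans hta (le_max_right _ _)
      · exact le_trans (hF i h) (le_max_left _ _)
  obtain ⟨s, hs, h⟩ := main Finset.univ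
  exact ⟨s, hs, fun i => h i (Finset.mem_univ i)⟩

lemma existsBelow (hh : CptClosed floorAvgOp S) (h0 : S.Nonempty) (z : Fin n → ℤ)
    (hw : ∀ i, ∃ s ∈ S, s i ≤ z i) : ∃ s ∈ S, ∀ i, s i ≤ z i := by
  have main : ∀ F : Finset (Fin n), ∃ s ∈ S, ∀ i ∈ F, s i ≤ z i := by
    intro F
    induction F using Finset.induction with
    | empty => exact ⟨h0.choose, h0.choose_spec, by simp⟩
    | @insert a F _ ih =>
      obtain ⟨s, hs, hF⟩ := ih
      obtain ⟨t, ht, hta⟩ := hw a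
      refine ⟨fun i => min (s i) (t i), minMem hh hs ht, fun i hi => ?_⟩
      rcases Finset.mem_insert.mp hi with h | h
      · subst h; exact le_trans (min_le_right _ _) hta
      · exact le_trans (min_le_left _ _) (hF i h)
  obtain ⟨s, hs, h⟩ := main Finset.univ
  exact ⟨s, hs, fun i => h i (Finset.mem_univ i)⟩

end Moves2

section KeyL
variable {n : ℕ} {S : Set (Fin n → ℤ)}

lemma pairT (hg : CptClosed ceilAvgOp S) (hh : CptClosed floorAvgOp S)
    {z w p q : Fin n → ℤ} (hw : w ∈ S) (hp : p ∈ S) (hq : q ∈ S) (i0 j : Fin n)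
    (h1 : w i0 - w j ≤ z i0 - z j) (h2 : p i0 ≤ z i0) (h3 : z j ≤ q j) :
    ∃ t ∈ S, t i0 ≤ z i0 ∧ z j ≤ t j := by
  by_cases hc : w i0 ≤ z i0
  · -- raise toward q
    set step : (Fin n → ℤ) → (Fin n → ℤ) := fun v i => v i + if v i < q i then 1 else 0 with hstep
    have key : ∀ m : ℕ, step^[m] w ∈ S ∧ step^[m] w i0 ≤ w i0 + m ∧
        min (w j + m) (z j) ≤ step^[m] w j := by
      intro m; induction m with
      | zero => refine ⟨hw, by simp, by simp⟩
      | succ m ih =>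
        obtain ⟨ihS, ih1, ih2⟩ := ih
        rw [Function.iterate_succ_apply']
        refine ⟨moveUp hg ihS hq, ?_, ?_⟩
        · have hv : step (step^[m] w) i0 = step^[m] w i0 + if step^[m] w i0 < q i0 then 1 else 0 := rfl
          rw [hv]; split_ifs <;> omega
        · have hv : step (step^[m] w) j = step^[m] w j + if step^[m] w j < q j then 1 else 0 := rfl
          rw [hv]; split_ifs with hlt <;> omega
    obtain ⟨hS, hA, hB⟩ := key (z j - w j).toNat
    exact ⟨_, hS, by omega, by omega⟩
  · -- lower toward p
    set step : (Fin n → ℤ) → (Fin n → ℤ) := fun v i => v i - if p i < v i then 1 else 0 with hstep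
    have key : ∀ m : ℕ, step^[m] w ∈ S ∧ w j - m ≤ step^[m] w j ∧
        step^[m] w i0 ≤ max (w i0 - m) (z i0) := by
      intro m; induction m with
      | zero => refine ⟨hw, by simp, by simp⟩
      | succ m ih =>
        obtain ⟨ihS, ih1, ih2⟩ := ih
        rw [Function.iterate_succ_apply']
        refine ⟨moveDown hh ihS hp, ?_, ?_⟩
        · have hv : step (step^[m] w) j = step^[m] w j - if p j < step^[m] w j then 1 else 0 := rfl
          rw [hv]; split_ifs <;> omega
        · have hv : step (step^[m] w) i0 = step^[m] w i0 - if p i0 < step^[m] w i0 then 1 else 0 := rfl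
          rw [hv]; split_ifs with hlt <;> omega
    obtain ⟨hS, hA, hB⟩ := key (w i0 - z i0).toNat
    exact ⟨_, hS, by omega, by omega⟩

lemma dcKey (hg : CptClosed ceilAvgOp S) (hh : CptClosed floorAvgOp S) (hn : 1 ≤ n)
    {z : Fin n → ℤ}
    (hij : ∀ i j : Fin n, ∃ s ∈ S, s i - s j ≤ z i - z j)
    (hlo : ∀ i, ∃ s ∈ S, s i ≤ z i) (hhi : ∀ i, ∃ s ∈ S, z i ≤ s i) : z ∈ S := by
  have h0 : S.Nonempty := by
    obtain ⟨s, hs, -⟩ := hlo ⟨0, by omega⟩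
    exact ⟨s, hs⟩
  obtain ⟨sp, hsp, hspz⟩ := existsAbove hg h0 z hhi
  obtain ⟨sm, hsm, hsmz⟩ := existsBelow hh h0 z hlo
  have main : ∀ N : ℕ, ∀ s ∈ S, (∀ i, z i ≤ s i) → (∑ i, (s i - z i).toNat) ≤ N → z ∈ S := by
    intro N
    induction N with
    | zero =>
      intro s hs hzs hsum
      have hz : s = z := by
        funext i
        have hterm : (s i - z i).toNat ≤ ∑ i, (s i - z i).toNat :=
          Finset.single_le_sum (f := fun i => (s i - z i).toNat)
            (fun i _ => Nat.zero_le _) (Finset.mem_univ i)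
        have := hzs i
        omega
      rwa [hz] at hs
    | succ N ih =>
      intro s hs hzs hsum
      by_cases hz : ∀ i, s i ≤ z i
      · have : s = z := funext fun i => le_antisymm (hz i) (hzs i)
        rwa [this] at hs
      · push_neg at hz
        obtain ⟨i0, hi0⟩ := hz
        have build : ∀ F : Finset (Fin n), ∃ t ∈ S, t i0 ≤ z i0 ∧ ∀ j ∈ F, z j ≤ t j := by
          intro F
          induction F using Finset.induction with
          | empty => exact ⟨sm, hsm, hsmz i0, by simp⟩
          | @insert a F _ ih2 =>
            obtain ⟨t, ht, hti0, htF⟩ := ih2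
            obtain ⟨w, hw, hw1⟩ := hij i0 a
            obtain ⟨u, hu, hu1, hu2⟩ := pairT hg hh hw hsm hsp i0 a hw1 (hsmz i0) (hspz a)
            refine ⟨fun i => max (t i) (u i), maxMem hg ht hu, max_le hti0 hu1, fun j hj => ?_⟩
            rcases Finset.mem_insert.mp hj with h | h
            · subst h; exact le_trans hu2 (le_max_right _ _)
            · exact le_trans (htF j h) (le_max_left _ _)
        obtain ⟨t, ht, hti0, htall⟩ := build Finset.univ
        have hs' : (fun i => s i - if t i < s i then 1 else 0) ∈ S := moveDown hh hs ht
        have hzs' : ∀ i, z i ≤ s i - if t i < s i then 1 else 0 := by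
          intro i
          have := htall i (Finset.mem_univ i)
          have h2 := hzs i
          by_cases h : t i < s i
          · rw [if_pos h]; omega
          · rw [if_neg h]; omega
        have hdec : (∑ i, ((s i - if t i < s i then 1 else 0) - z i).toNat) ≤ N := by
          have hlt : ∑ i, ((s i - if t i < s i then 1 else 0) - z i).toNat
              < ∑ i, (s i - z i).toNat := by
            refine Finset.sum_lt_sum (fun i _ => ?_) ⟨i0, Finset.mem_univ i0, ?_⟩
            · have := hzs i
              by_cases h : t i < s i
              · rw [if_pos h]; omega
              · rw [if_neg h]; omega
            · have h1 : t i0 < s i0 := lt_of_le_of_lt hti0 hi0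
              rw [if_pos h1]
              have := hzs i0
              omega
          omega
        exact ih _ hs' hzs' hdec
  exact main _ sp hsp hspz le_rfl

end KeyL


lemma clGH_sub (T : Set (Fin 2 → ℤ)) : T ⊆ clGH T := by
  intro x hx
  intro U hU
  exact hU.1 hx

lemma clGH_eq {T : Set (Fin 2 → ℤ)} (h1 : CptClosed ceilAvgOp T)
    (h2 : CptClosed floorAvgOp T) : clGH T = T := by
  apply subset_antisymm
  · exact Set.sInter_subset_of_mem ⟨subset_rfl, h1, h2⟩
  · exact clGH_sub T

lemma clGH_closedG (T : Set (Fin 2 → ℤ)) : CptClosed ceilAvgOp (clGH T) := by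
  intro x hx
  intro U hU
  exact hU.2.1 x (fun l => hx l U hU)

lemma clGH_closedH (T : Set (Fin 2 → ℤ)) : CptClosed floorAvgOp (clGH T) := by
  intro x hx
  intro U hU
  exact hU.2.2 x (fun l => hx l U hU)

-- projSet of a closed set is closed
lemma projSet_closedG {n : ℕ} {S : Set (Fin n → ℤ)} (hg : CptClosed ceilAvgOp S)
    (i j : Fin n) : CptClosed ceilAvgOp (projSet i j S) := by
  intro x hx
  choose s hsS hsp using fun l => hx l
  have e0 : (fun l => s l i) = (fun l => x l 0) := by
    funext l
    have h := congrFun (hsp l) 0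
    simpa [proj2] using h
  have e1 : (fun l => s l j) = (fun l => x l 1) := by
    funext l
    have h := congrFun (hsp l) 1
    simpa [proj2] using h
  refine ⟨fun k => ceilAvgOp fun l => s l k, hg s hsS, ?_⟩
  funext i'
  fin_cases i' <;> simp [proj2] <;> [rw [e0]; rw [e1]]


lemma projSet_closedH {n : ℕ} {S : Set (Fin n → ℤ)} (hh : CptClosed floorAvgOp S)
    (i j : Fin n) : CptClosed floorAvgOp (projSet i j S) := by
  intro x hx
  choose s hsS hsp using fun l => hx l
  have e0 : (fun l => s l i) = (fun l => x l 0) := by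
    funext l
    have h := congrFun (hsp l) 0
    simpa [proj2] using h
  have e1 : (fun l => s l j) = (fun l => x l 1) := by
    funext l
    have h := congrFun (hsp l) 1
    simpa [proj2] using h
  refine ⟨fun k => floorAvgOp fun l => s l k, hh s hsS, ?_⟩
  funext i'
  fin_cases i' <;> simp [proj2] <;> [rw [e0]; rw [e1]]



lemma closed_to_join {n : ℕ} (hn : 2 ≤ n) {S : Set (Fin n → ℤ)}
    (hg : CptClosed ceilAvgOp S) (hh : CptClosed floorAvgOp S) :
    S = joinPairs (fun i j => clGH (projSet i j S)) := by
  have hrep : (fun i j : Fin n => clGH (projSet i j S)) = fun i j => projSet i j S := by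
    funext i j
    exact clGH_eq (projSet_closedG hg i j) (projSet_closedH hh i j)
  rw [hrep]
  apply subset_antisymm
  · intro x hx i j hij
    exact ⟨x, hx, rfl⟩
  · intro x hx
    have wit : ∀ i j : Fin n, i ≠ j → ∃ s ∈ S, s i = x i ∧ s j = x j := by
      intro i j hne
      rcases lt_or_gt_of_ne hne with h | h
      · obtain ⟨s, hs, hp⟩ := hx i j h
        refine ⟨s, hs, ?_, ?_⟩
        · have h0 := congrFun hp 0; simpa [proj2] using h0
        · have h1 := congrFun hp 1; simpa [proj2] using h1
      · obtain ⟨s, hs, hp⟩ := hx j i h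
        refine ⟨s, hs, ?_, ?_⟩
        · have h1 := congrFun hp 1; simpa [proj2] using h1
        · have h0 := congrFun hp 0; simpa [proj2] using h0
    have wit1 : ∀ i : Fin n, ∃ s ∈ S, s i = x i := by
      intro i
      by_cases h : i = ⟨0, by omega⟩
      · subst h
        obtain ⟨s, hs, h1, _⟩ := wit ⟨0, by omega⟩ ⟨1, by omega⟩ (by simp [Fin.ext_iff])
        exact ⟨s, hs, h1⟩
      · obtain ⟨s, hs, h1, _⟩ := wit i ⟨0, by omega⟩ h
        exact ⟨s, hs, h1⟩
    apply dcKey hg hh (by omega)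
    · intro i j
      by_cases hij' : i = j
      · subst hij'
        obtain ⟨s, hs, _⟩ := wit1 i
        exact ⟨s, hs, by omega⟩
      · obtain ⟨s, hs, h1, h2⟩ := wit i j hij'
        exact ⟨s, hs, by omega⟩
    · intro i
      obtain ⟨s, hs, h1⟩ := wit1 i
      exact ⟨s, hs, by omega⟩
    · intro i
      obtain ⟨s, hs, h1⟩ := wit1 i
      exact ⟨s, hs, by omega⟩

lemma join_to_closedG {n : ℕ} {S : Set (Fin n → ℤ)}
    (hS : S = joinPairs (fun i j => clGH (projSet i j S))) : CptClosed ceilAvgOp S := by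
  intro x hx
  rw [hS]
  intro i j hij
  have hmem : ∀ l, proj2 i j (x l) ∈ clGH (projSet i j S) := by
    intro l
    have hl := hx l
    rw [hS] at hl
    exact hl i j hij
  have h := clGH_closedG (projSet i j S) (fun l => proj2 i j (x l)) hmem
  have e : proj2 i j (fun k => ceilAvgOp fun l => x l k)
      = fun i' => ceilAvgOp fun l => proj2 i j (x l) i' := by
    funext i'
    fin_cases i' <;> simp [proj2]
  rw [e]
  exact h

lemma join_to_closedH {n : ℕ} {S : Set (Fin n → ℤ)}
    (hS : S = joinPairs (fun i j => clGH (projSet i j S))) : CptClosed floorAvgOp S := by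
  intro x hx
  rw [hS]
  intro i j hij
  have hmem : ∀ l, proj2 i j (x l) ∈ clGH (projSet i j S) := by
    intro l
    have hl := hx l
    rw [hS] at hl
    exact hl i j hij
  have h := clGH_closedH (projSet i j S) (fun l => proj2 i j (x l)) hmem
  have e : proj2 i j (fun k => floorAvgOp fun l => x l k)
      = fun i' => floorAvgOp fun l => proj2 i j (x l) i' := by
    funext i'
    fin_cases i' <;> simp [proj2]
  rw [e]
  exact h



lemma rowG {n : ℕ} (a : Fin n → ℤ) (ha : ∀ j, a j = 0 ∨ a j = -1 ∨ a j = 1)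
    (hneg : (∑ j, (if a j = -1 then (1:ℤ) else 0)) ≤ 1)
    (u v : Fin n → ℤ) (c : ℤ) (hu : c ≤ ∑ j, a j * u j) (hv : c ≤ ∑ j, a j * v j) :
    c ≤ ∑ j, a j * muG (u j) (v j) := by
  have key : (0:ℤ) ≤ ∑ j, (2 * (a j * muG (u j) (v j)) - a j * u j - a j * v j
      + (if a j = -1 then (1:ℤ) else 0)) := by
    apply Finset.sum_nonneg
    intro j _
    have hch := muG_char (u j) (v j)
    rcases ha j with h | h | h <;> rw [h] <;> norm_num <;> omega
  have e : ∑ j, (2 * (a j * muG (u j) (v j)) - a j * u j - a j * v j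
      + (if a j = -1 then (1:ℤ) else 0))
      = 2 * (∑ j, a j * muG (u j) (v j)) - (∑ j, a j * u j) - (∑ j, a j * v j)
      + (∑ j, (if a j = -1 then (1:ℤ) else 0)) := by
    rw [Finset.sum_add_distrib, Finset.sum_sub_distrib, Finset.sum_sub_distrib, Finset.mul_sum]
  rw [e] at key
  omega

lemma rowH {n : ℕ} (a : Fin n → ℤ) (ha : ∀ j, a j = 0 ∨ a j = -1 ∨ a j = 1)
    (hpos : (∑ j, (if a j = 1 then (1:ℤ) else 0)) ≤ 1)
    (u v : Fin n → ℤ) (c : ℤ) (hu : c ≤ ∑ j, a j * u j) (hv : c ≤ ∑ j, a j * v j) :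
    c ≤ ∑ j, a j * muH (u j) (v j) := by
  have key : (0:ℤ) ≤ ∑ j, (2 * (a j * muH (u j) (v j)) - a j * u j - a j * v j
      + (if a j = 1 then (1:ℤ) else 0)) := by
    apply Finset.sum_nonneg
    intro j _
    have hch := muH_char (u j) (v j)
    rcases ha j with h | h | h <;> rw [h] <;> norm_num <;> omega
  have e : ∑ j, (2 * (a j * muH (u j) (v j)) - a j * u j - a j * v j
      + (if a j = 1 then (1:ℤ) else 0))
      = 2 * (∑ j, a j * muH (u j) (v j)) - (∑ j, a j * u j) - (∑ j, a j * v j)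
      + (∑ j, (if a j = 1 then (1:ℤ) else 0)) := by
    rw [Finset.sum_add_distrib, Finset.sum_sub_distrib, Finset.sum_sub_distrib, Finset.mul_sum]
  rw [e] at key
  omega

lemma card_to_sum {n : ℕ} (a : Fin n → ℤ) (c : ℤ) (h : {j | a j = c}.ncard ≤ 1) :
    (∑ j, (if a j = c then (1:ℤ) else 0)) ≤ 1 := by
  have h2 : {j | a j = c} = ↑(Finset.univ.filter fun j => a j = c) := by
    ext j; simp
  rw [h2, Set.ncard_coe_finset] at h
  have h3 : (∑ j, (if a j = c then (1:ℤ) else 0))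
      = ((Finset.univ.filter fun j => a j = c).card : ℤ) := by
    rw [Finset.card_filter]
    push_cast
    rfl
  rw [h3]
  exact_mod_cast h

lemma repDC_to_closed {n : ℕ} {S : Set (Fin n → ℤ)} (h : RepDC S) :
    CptClosed ceilAvgOp S ∧ CptClosed floorAvgOp S := by
  obtain ⟨mR, A, b, hUnit, hpos, hneg, hS⟩ := h
  constructor
  · intro x hx
    have hu := hx 0
    have hv := hx 1
    rw [hS] at hu hv ⊢
    intro i
    have hu' : (⌈b i⌉ : ℤ) ≤ ∑ j, A i j * x 0 j := Int.ceil_le.mpr (hu i)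
    have hv' : (⌈b i⌉ : ℤ) ≤ ∑ j, A i j * x 1 j := Int.ceil_le.mpr (hv i)
    have hrow := rowG (A i) (fun j => hUnit i j) (card_to_sum (A i) (-1) (hneg i))
      (x 0) (x 1) ⌈b i⌉ hu' hv'
    have heq : (∑ j, A i j * ((fun i' => ceilAvgOp fun l => x l i') j))
        = ∑ j, A i j * muG (x 0 j) (x 1 j) := rfl
    show b i ≤ ((∑ j, A i j * ((fun i' => ceilAvgOp fun l => x l i') j) : ℤ) : ℝ)
    rw [heq]
    calc b i ≤ (⌈b i⌉ : ℝ) := Int.le_ceil _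
      _ ≤ _ := by exact_mod_cast hrow
  · intro x hx
    have hu := hx 0
    have hv := hx 1
    rw [hS] at hu hv ⊢
    intro i
    have hu' : (⌈b i⌉ : ℤ) ≤ ∑ j, A i j * x 0 j := Int.ceil_le.mpr (hu i)
    have hv' : (⌈b i⌉ : ℤ) ≤ ∑ j, A i j * x 1 j := Int.ceil_le.mpr (hv i)
    have hrow := rowH (A i) (fun j => hUnit i j) (card_to_sum (A i) 1 (hpos i))
      (x 0) (x 1) ⌈b i⌉ hu' hv'
    have heq : (∑ j, A i j * ((fun i' => floorAvgOp fun l => x l i') j))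
        = ∑ j, A i j * muH (x 0 j) (x 1 j) := rfl
    show b i ≤ ((∑ j, A i j * ((fun i' => floorAvgOp fun l => x l i') j) : ℤ) : ℝ)
    rw [heq]
    calc b i ≤ (⌈b i⌉ : ℝ) := Int.le_ceil _
      _ ≤ _ := by exact_mod_cast hrow



private def DCval {n : ℕ} : ((Fin n × Fin n) ⊕ (Fin n ⊕ Fin n)) → (Fin n → ℤ) → ℤ
  | .inl (i, j) => fun x => x i - x j
  | .inr (.inl i) => fun x => x i
  | .inr (.inr i) => fun x => -(x i)

private def DCD {n : ℕ} (S : Set (Fin n → ℤ)) (r : (Fin n × Fin n) ⊕ (Fin n ⊕ Fin n)) :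
    Set ℝ := (fun s => ((DCval r s : ℤ) : ℝ)) '' S

private def DCrow {n : ℕ} : ((Fin n × Fin n) ⊕ (Fin n ⊕ Fin n)) → Fin n → ℤ
  | .inl (i, j) => fun k => (if k = i then 1 else 0) - (if k = j then 1 else 0)
  | .inr (.inl i) => fun k => if k = i then 1 else 0
  | .inr (.inr i) => fun k => if k = i then -1 else 0

open Classical in
private noncomputable def DCrow' {n : ℕ} (S : Set (Fin n → ℤ))
    (r : (Fin n × Fin n) ⊕ (Fin n ⊕ Fin n)) : Fin n → ℤ :=
  if BddBelow (DCD S r) then DCrow r else 0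

open Classical in
private noncomputable def DCb {n : ℕ} (S : Set (Fin n → ℤ))
    (r : (Fin n × Fin n) ⊕ (Fin n ⊕ Fin n)) : ℝ :=
  if BddBelow (DCD S r) then sInf (DCD S r) else 0

open Classical in
private lemma DCsum {n : ℕ} (S : Set (Fin n → ℤ)) (r) (x : Fin n → ℤ) :
    ∑ k, DCrow' S r k * x k = if BddBelow (DCD S r) then DCval r x else 0 := by
  unfold DCrow'
  split_ifs with h
  · rcases r with ⟨i, j⟩ | i | i <;>
      simp [DCrow, DCval, sub_mul, ite_mul, Finset.sum_sub_distrib]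
  · simp

private lemma DC_extract {n : ℕ} {S : Set (Fin n → ℤ)} (hne : S.Nonempty) (r)
    {x : Fin n → ℤ} (hx : DCb S r ≤ ((∑ k, DCrow' S r k * x k : ℤ) : ℝ)) :
    ∃ s ∈ S, DCval r s ≤ DCval r x := by
  rw [DCsum] at hx
  unfold DCb at hx
  split_ifs at hx with h
  · by_contra hcon
    push_neg at hcon
    have hlb : ∀ d ∈ DCD S r, ((DCval r x + 1 : ℤ) : ℝ) ≤ d := by
      rintro d ⟨s, hsS, rfl⟩
      have hc := hcon s hsS
      have h5 : (DCval r x + 1 : ℤ) ≤ DCval r s := by omega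
      show ((DCval r x + 1 : ℤ) : ℝ) ≤ ((DCval r s : ℤ) : ℝ)
      exact_mod_cast h5
    have h2 : ((DCval r x + 1 : ℤ) : ℝ) ≤ sInf (DCD S r) := le_csInf (hne.image _) hlb
    have h3 : ((DCval r x + 1 : ℤ) : ℝ) ≤ ((DCval r x : ℤ) : ℝ) := le_trans h2 hx
    have h4 : (DCval r x + 1 : ℤ) ≤ DCval r x := by exact_mod_cast h3
    omega
  · obtain ⟨d, hd, hdlt⟩ := (not_bddBelow_iff.mp h) ((DCval r x : ℤ) : ℝ)
    obtain ⟨s, hsS, rfl⟩ := hd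
    refine ⟨s, hsS, ?_⟩
    have hdlt' : ((DCval r s : ℤ) : ℝ) < ((DCval r x : ℤ) : ℝ) := hdlt
    have h5 : (DCval r s : ℤ) < (DCval r x : ℤ) := by exact_mod_cast hdlt'
    omega

private lemma DC_set_eq {n : ℕ} (hn : 2 ≤ n) {S : Set (Fin n → ℤ)}
    (hg : CptClosed ceilAvgOp S) (hh : CptClosed floorAvgOp S) (hne : S.Nonempty) :
    S = {x : Fin n → ℤ | ∀ r, DCb S r ≤ ((∑ k, DCrow' S r k * x k : ℤ) : ℝ)} := by
  ext x
  simp only [Set.mem_setOf_eq]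
  constructor
  · intro hx r
    rw [DCsum]
    unfold DCb
    split_ifs with h
    · exact csInf_le h ⟨x, hx, rfl⟩
    · norm_num
  · intro hx
    apply dcKey hg hh (by omega)
    · intro i j
      obtain ⟨s, hsS, hle⟩ := DC_extract hne (.inl (i, j)) (hx _)
      exact ⟨s, hsS, hle⟩
    · intro i
      obtain ⟨s, hsS, hle⟩ := DC_extract hne (.inr (.inl i)) (hx _)
      exact ⟨s, hsS, hle⟩
    · intro i
      obtain ⟨s, hsS, hle⟩ := DC_extract hne (.inr (.inr i)) (hx _)
      refine ⟨s, hsS, ?_⟩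
      have h5 : -(s i) ≤ -(x i) := hle
      omega

private lemma ncard_le_one_of_subset_singleton {α : Type*} {X : Set α} {i : α}
    (h : X ⊆ {i}) : X.ncard ≤ 1 :=
  le_trans (Set.ncard_le_ncard h (Set.finite_singleton i)) (le_of_eq (Set.ncard_singleton i))

private lemma DCrow_pos_sub {n : ℕ} (S : Set (Fin n → ℤ)) (hn : 2 ≤ n)
    (r : (Fin n × Fin n) ⊕ (Fin n ⊕ Fin n)) :
    {k | DCrow' S r k = 1}.ncard ≤ 1 ∧ {k | DCrow' S r k = -1}.ncard ≤ 1 := by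
  unfold DCrow'
  split_ifs with h
  · rcases r with ⟨i, j⟩ | i | i
    · constructor
      · apply ncard_le_one_of_subset_singleton (i := i)
        intro k hk
        simp only [Set.mem_setOf_eq, DCrow] at hk
        simp only [Set.mem_singleton_iff]
        by_contra hne
        rw [if_neg hne] at hk
        split_ifs at hk <;> omega
      · apply ncard_le_one_of_subset_singleton (i := j)
        intro k hk
        simp only [Set.mem_setOf_eq, DCrow] at hk
        simp only [Set.mem_singleton_iff]
        by_contra hne
        rw [if_neg hne] at hk
        split_ifs at hk <;> omega
    · constructor <;>
        [apply ncard_le_one_of_subset_singleton (i := i);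
         apply ncard_le_one_of_subset_singleton (i := i)] <;>
        · intro k hk
          simp only [Set.mem_setOf_eq, DCrow] at hk
          simp only [Set.mem_singleton_iff]
          by_contra hne
          rw [if_neg hne] at hk
          omega
    · constructor <;>
        [apply ncard_le_one_of_subset_singleton (i := i);
         apply ncard_le_one_of_subset_singleton (i := i)] <;>
        · intro k hk
          simp only [Set.mem_setOf_eq, DCrow] at hk
          simp only [Set.mem_singleton_iff]
          by_contra hne
          rw [if_neg hne] at hk
          omega
  · constructor
    · apply ncard_le_one_of_subset_singleton (i := (⟨0, by omega⟩ : Fin n))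
      intro k hk
      simp only [Set.mem_setOf_eq, Pi.zero_apply] at hk
      omega
    · apply ncard_le_one_of_subset_singleton (i := (⟨0, by omega⟩ : Fin n))
      intro k hk
      simp only [Set.mem_setOf_eq, Pi.zero_apply] at hk


private lemma DCrow_unit {n : ℕ} (S : Set (Fin n → ℤ)) (r) (k : Fin n) :
    DCrow' S r k = 0 ∨ DCrow' S r k = -1 ∨ DCrow' S r k = 1 := by
  unfold DCrow'
  split_ifs with h
  · rcases r with ⟨i, j⟩ | i | i <;> simp only [DCrow] <;> split_ifs <;> norm_num
  · left
    rfl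

lemma closed_to_repDC {n : ℕ} (hn : 2 ≤ n) {S : Set (Fin n → ℤ)}
    (hg : CptClosed ceilAvgOp S) (hh : CptClosed floorAvgOp S) : RepDC S := by
  by_cases hne : S.Nonempty
  · classical
    set e := (Fintype.equivFin ((Fin n × Fin n) ⊕ (Fin n ⊕ Fin n))).symm with he
    refine ⟨_, fun r k => DCrow' S (e r) k, fun r => DCb S (e r), ?_, ?_, ?_, ?_⟩
    · intro r k
      exact DCrow_unit S (e r) k
    · intro r
      exact (DCrow_pos_sub S hn (e r)).1
    · intro r
      exact (DCrow_pos_sub S hn (e r)).2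
    · conv_lhs => rw [DC_set_eq hn hg hh hne]
      ext x
      simp only [Set.mem_setOf_eq]
      constructor
      · intro hx r
        exact hx (e r)
      · intro hx rI
        have h2 := hx (e.symm rI)
        rwa [Equiv.apply_symm_apply] at h2
  · rw [Set.not_nonempty_iff_eq_empty] at hne
    refine ⟨1, fun _ _ => 0, fun _ => 1, ?_, ?_, ?_, ?_⟩
    · intro i j
      left
      rfl
    · intro i
      apply ncard_le_one_of_subset_singleton (i := (⟨0, by omega⟩ : Fin n))
      intro k hk
      simp only [Set.mem_setOf_eq] at hk
      omega
    · intro i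
      apply ncard_le_one_of_subset_singleton (i := (⟨0, by omega⟩ : Fin n))
      intro k hk
      simp only [Set.mem_setOf_eq] at hk
      omega
    · rw [hne]
      ext x
      simp only [Set.mem_empty_iff_false, Set.mem_setOf_eq, false_iff]
      intro hcon
      have h1 := hcon 0
      simp at h1
      linarith


/-- (a) DC representability ⇔ (b) closedness under `g` and `h`
⇔ (c) `S = ⋈_{i<j} cl_{g,h}(π_{i,j}(S))`. -/
theorem stmt_7 {n : ℕ} (hn : 2 ≤ n) (S : Set (Fin n → ℤ)) :
    (RepDC S ↔ (CptClosed ceilAvgOp S ∧ CptClosed floorAvgOp S)) ∧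
    ((CptClosed ceilAvgOp S ∧ CptClosed floorAvgOp S) ↔
      S = joinPairs (fun i j => clGH (projSet i j S))) := by
  constructor
  · constructor
    · exact fun h => repDC_to_closed h
    · exact fun h => closed_to_repDC hn h.1 h.2
  · constructor
    · exact fun h => closed_to_join hn h.1 h.2
    · exact fun h => ⟨join_to_closedG h, join_to_closedH h⟩
end
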